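/- Let A be a UC family with ∅ ∈ A and union [n], and suppose there is a nonnegative vector z with ∑_i z_i ≥ 1 such that for every j ∈ [n], setting B^j = P([n]\{j}) ⊎ A, the inequality ∑_{S ∈ B^j}(∑_{i∈S} z_i − ∑_{i∉S} z_i) ≥ 0 holds. Then for each j ∈ [n], setting G^j = B^j \ P([n]\{j}), the inequality ∑_{S ∈ G^j}(∑_{i∈S} z_i − ∑_{i∉S} z_i) ≥ 0 also holds. -/

import Mathlib

open Finset

def UnionClosed (F : Finset (Finset ℕ)) : Prop := ∀ A ∈ F, ∀ B ∈ F, A ∪ B ∈ F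

def uplus (F G : Finset (Finset ℕ)) : Finset (Finset ℕ) :=
  (F ×ˢ G).image fun p => p.1 ∪ p.2

lemma two_mul_sum_powerset (z : ℕ → ℝ) (T : Finset ℕ) :
    2 * ∑ S ∈ T.powerset, ∑ i ∈ S, z i = 2 ^ T.card * ∑ i ∈ T, z i := by
  classical
  induction T using Finset.induction_on with
  | empty => simp
  | insert a T ha ih =>
    rw [Finset.sum_powerset_insert ha]
    have h2 : ∑ S ∈ T.powerset, ∑ i ∈ insert a S, z i
        = 2 ^ T.card * z a + ∑ S ∈ T.powerset, ∑ i ∈ S, z i := by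
      have hc : ∀ S ∈ T.powerset, ∑ i ∈ insert a S, z i = z a + ∑ i ∈ S, z i := by
        intro S hS
        exact Finset.sum_insert (fun hmem => ha (Finset.mem_powerset.mp hS hmem))
      rw [Finset.sum_congr rfl hc, Finset.sum_add_distrib, Finset.sum_const,
        Finset.card_powerset, nsmul_eq_mul]
      push_cast; ring
    rw [h2, Finset.sum_insert ha, Finset.card_insert_of_notMem ha]
    push_cast
    ring_nf
    ring_nf at ih
    linarith

theorem stmt10 (n : ℕ) (A : Finset (Finset ℕ)) (hUC : UnionClosed A)
    (hempty : ∅ ∈ A) (hA : ∀ S ∈ A, S ⊆ Finset.Icc 1 n) (hunion : A.sup id = Finset.Icc 1 n)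
    (z : ℕ → ℝ) (hz : ∀ i, 0 ≤ z i) (hsum : 1 ≤ ∑ i ∈ Finset.Icc 1 n, z i)
    (h : ∀ j ∈ Finset.Icc 1 n,
      0 ≤ ∑ S ∈ (uplus (((Finset.Icc 1 n).erase j).powerset) A),
            ((∑ i ∈ S, z i) - ∑ i ∈ Finset.Icc 1 n \ S, z i)) :
    ∀ j ∈ Finset.Icc 1 n,
      0 ≤ ∑ S ∈ ((uplus (((Finset.Icc 1 n).erase j).powerset) A) \
                  ((Finset.Icc 1 n).erase j).powerset),
            ((∑ i ∈ S, z i) - ∑ i ∈ Finset.Icc 1 n \ S, z i) := by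
  intro j hj
  classical
  set T := (Finset.Icc 1 n).erase j with hT
  set f : Finset ℕ → ℝ := fun S => ((∑ i ∈ S, z i) - ∑ i ∈ Finset.Icc 1 n \ S, z i) with hf
  have hsub : T.powerset ⊆ uplus T.powerset A := by
    intro S hS
    simp only [uplus, Finset.mem_image, Finset.mem_product, Prod.exists]
    exact ⟨S, ∅, ⟨hS, hempty⟩, Finset.union_empty S⟩
  have hsplit := Finset.sum_sdiff (f := f) hsub
  -- compute the powerset sum
  have hTsub : T ⊆ Finset.Icc 1 n := Finset.erase_subset _ _
  have hC : ∑ i ∈ T, z i = (∑ i ∈ Finset.Icc 1 n, z i) - z j := by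
    have := Finset.add_sum_erase _ z hj
    rw [hT]; linarith
  have hD : ∑ S ∈ T.powerset, f S = - (2 ^ T.card * z j) := by
    have hcong : ∀ S ∈ T.powerset, f S
        = 2 * (∑ i ∈ S, z i) - ∑ i ∈ Finset.Icc 1 n, z i := by
      intro S hS
      have hSsub : S ⊆ Finset.Icc 1 n := (Finset.mem_powerset.mp hS).trans hTsub
      rw [hf]
      simp only
      rw [Finset.sum_sdiff_eq_sub hSsub]
      ring
    rw [Finset.sum_congr rfl hcong, Finset.sum_sub_distrib, Finset.sum_const,
      Finset.card_powerset, nsmul_eq_mul, ← Finset.mul_sum, two_mul_sum_powerset, hC]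
    push_cast
    ring
  have hB := h j hj
  have hDle : ∑ S ∈ T.powerset, f S ≤ 0 := by
    rw [hD]
    have : (0:ℝ) ≤ 2 ^ T.card * z j := mul_nonneg (by positivity) (hz j)
    linarith
  have : 0 ≤ ∑ S ∈ (uplus T.powerset A) \ T.powerset, f S := by
    have hBsum : ∑ S ∈ uplus T.powerset A, f S
        = ∑ S ∈ (uplus T.powerset A) \ T.powerset, f S + ∑ S ∈ T.powerset, f S := hsplit.symm
    rw [hBsum] at hB
    linarith
  exact this
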